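/- Let p be an odd prime, let n ≥ 1, set k = 2n, and let χ be a primitive Dirichlet character of conductor p^k such that χ(1 + p^n x) = e_{p^n}(−x) for all integers x. Then for every Dirichlet character ψ modulo p^n, the Gauss sum of the character χ·ψ modulo p^k satisfies τ(χ·ψ) = p^n · e^{2πi/p^k}. -/

import Mathlib

open Complex

/-- `eN q x = e^{2πix/q}`. -/
noncomputable def eN (q : ℕ) (x : ℤ) : ℂ := Complex.exp (2 * Real.pi * Complex.I * x / q)

lemma eN_add (q : ℕ) (x y : ℤ) : eN q (x + y) = eN q x * eN q y := by
  rw [eN, eN, eN, ← Complex.exp_add]; congr 1; push_cast; ring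

lemma eN_pow (q : ℕ) (x : ℤ) (b : ℕ) : eN q (x * b) = (eN q x) ^ b := by
  rw [eN, eN, ← Complex.exp_nat_mul]; congr 1; push_cast; ring

lemma eN_eq_one_iff (q : ℕ) (hq : q ≠ 0) (x : ℤ) : eN q x = 1 ↔ (q : ℤ) ∣ x := by
  rw [eN, Complex.exp_eq_one_iff]
  constructor
  · rintro ⟨m, hm⟩
    have hq' : (q : ℂ) ≠ 0 := Nat.cast_ne_zero.mpr hq
    have h2 : (2 : ℂ) * Real.pi * Complex.I ≠ 0 := by
      simp [Real.pi_ne_zero, Complex.I_ne_zero]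
    field_simp at hm
    have hx : (x : ℂ) = m * q :=
      by linear_combination hm
    have hx' : x = m * q := by exact_mod_cast hx
    exact ⟨m, by rw [hx', mul_comm]⟩
  · rintro ⟨m, rfl⟩
    refine ⟨m, ?_⟩
    have hq' : (q : ℂ) ≠ 0 := Nat.cast_ne_zero.mpr hq
    push_cast
    field_simp

lemma eN_mul_base (q m : ℕ) (hq : q ≠ 0) (x : ℤ) : eN (m * q) (q * x) = eN m x := by
  rw [eN, eN]; congr 1
  have hq' : (q : ℂ) ≠ 0 := Nat.cast_ne_zero.mpr hq
  push_cast
  by_cases hm : (m : ℂ) = 0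
  · rw [hm]; simp
  · field_simp

lemma eN_zero (q : ℕ) : eN q 0 = 1 := by simp [eN]

lemma gauss_aux (p n N K : ℕ) (hp : p.Prime) (hn : 1 ≤ n)
    (hNdef : N = p ^ n) (hKdef : K = p ^ (2 * n)) [NeZero K]
    (Θ : DirichletCharacter ℂ K)
    (hΘ : ∀ x : ℤ, Θ ((1 + N * x : ℤ) : ZMod K) = eN N (-x)) :
    (∑ t : ZMod K, Θ t * eN K (t.val : ℤ))
      = (N : ℂ) * Complex.exp (2 * Real.pi * Complex.I / (K : ℂ)) := by
  have hNK : K = N * N := by rw [hKdef, hNdef, two_mul, pow_add]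
  have hN0 : N ≠ 0 := hNdef ▸ pow_ne_zero _ hp.ne_zero
  have hN1 : 1 < N := hNdef ▸ Nat.one_lt_pow (by omega) hp.one_lt
  have hK1 : 1 < K := hKdef ▸ Nat.one_lt_pow (by omega) hp.one_lt
  -- geometric sum
  have geom : ∀ ζ : ℂ, ζ ^ N = 1 →
      (∑ b ∈ Finset.range N, ζ ^ b) = if ζ = 1 then (N : ℂ) else 0 := by
    intro ζ hζ
    by_cases h1 : ζ = 1
    · simp [h1]
    · rw [if_neg h1, geom_sum_eq h1, hζ]
      simp
  -- step 1 : reindex the sum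
  have step1 :
      (∑ t : ZMod K, Θ t * eN K (t.val : ℤ)) =
      ∑ a ∈ Finset.range N, ∑ b ∈ Finset.range N,
        Θ ((a + N * b : ℕ) : ZMod K) * eN K ((a + N * b : ℕ) : ℤ) := by
    rw [← Finset.sum_product']
    refine Finset.sum_nbij' (fun t => (t.val % N, t.val / N))
      (fun ab => ((ab.1 + N * ab.2 : ℕ) : ZMod K)) ?_ ?_ ?_ ?_ ?_
    · intro t _
      have htv : t.val < N * N := hNK ▸ ZMod.val_lt t
      simp only [Finset.mem_product, Finset.mem_range]
      exact ⟨Nat.mod_lt _ (by omega), Nat.div_lt_of_lt_mul (by omega)⟩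
    · intro ab _; exact Finset.mem_univ _
    · intro t _
      dsimp only
      rw [Nat.mod_add_div]
      simp [ZMod.natCast_val, ZMod.cast_id]
    · rintro ⟨a, b⟩ hab
      simp only [Finset.mem_product, Finset.mem_range] at hab
      obtain ⟨ha, hb⟩ := hab
      have hlt : a + N * b < K := by rw [hNK]; nlinarith
      have hval : ((a + N * b : ℕ) : ZMod K).val = a + N * b :=
        ZMod.val_cast_of_lt hlt
      dsimp only
      rw [hval]
      simp only [Prod.mk.injEq]
      constructor
      · rw [Nat.add_mul_mod_self_left, Nat.mod_eq_of_lt ha]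
      · rw [Nat.add_mul_div_left _ _ (by omega : 0 < N), Nat.div_eq_of_lt ha, zero_add]
    · intro t _
      dsimp only
      rw [Nat.mod_add_div]
      simp [ZMod.natCast_val, ZMod.cast_id]
  rw [step1]
  -- inner sums
  have inner : ∀ a ∈ Finset.range N,
      (∑ b ∈ Finset.range N, Θ ((a + N * b : ℕ) : ZMod K) * eN K ((a + N * b : ℕ) : ℤ))
        = if a = 1 then (N : ℂ) * Complex.exp (2 * Real.pi * Complex.I / (K : ℂ)) else 0 := by
    intro a ha
    rw [Finset.mem_range] at ha
    by_cases hpa : p ∣ a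
    · have ha1 : a ≠ 1 := by
        rintro rfl
        exact absurd (Nat.le_of_dvd one_pos hpa) (by have := hp.one_lt; omega)
      rw [if_neg ha1]
      refine Finset.sum_eq_zero fun b _ => ?_
      have hnu : ¬ IsUnit ((a + N * b : ℕ) : ZMod K) := by
        rw [ZMod.isUnit_iff_coprime]
        intro hco
        have hpN : p ∣ N := hNdef ▸ dvd_pow_self p (by omega)
        have hpd : p ∣ (a + N * b) := dvd_add hpa (hpN.mul_right b)
        have hpK : p ∣ K := hKdef ▸ dvd_pow_self p (by omega)
        have : p ∣ 1 := hco ▸ Nat.dvd_gcd hpd hpK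
        exact absurd (Nat.le_of_dvd one_pos this) (by have := hp.one_lt; omega)
      rw [Θ.map_nonunit hnu, zero_mul]
    · -- unit case
      have hcop : Nat.Coprime a K := by
        rw [hKdef]
        exact Nat.Coprime.pow_right _ (((Nat.Prime.coprime_iff_not_dvd hp).mpr hpa).symm)
      have hA : IsUnit ((a : ℕ) : ZMod K) := (ZMod.isUnit_iff_coprime a K).mpr hcop
      have hAc : ((a : ℕ) : ZMod K) * ((((a : ℕ) : ZMod K)⁻¹).val : ZMod K) = 1 := by
        rw [ZMod.natCast_val, ZMod.cast_id]
        exact ZMod.mul_inv_of_unit _ hA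
      set c : ℕ := (((a : ℕ) : ZMod K)⁻¹).val with hcdef
      -- pointwise identity
      have key : ∀ b ∈ Finset.range N,
          Θ ((a + N * b : ℕ) : ZMod K) * eN K ((a + N * b : ℕ) : ℤ)
            = (Θ ((a : ℕ) : ZMod K) * eN K (a : ℤ)) * (eN N (1 - (c : ℤ))) ^ b := by
        intro b _
        have e1 : ((a + N * b : ℕ) : ZMod K)
            = ((a : ℕ) : ZMod K) * (((1 + (N : ℤ) * ((c : ℤ) * (b : ℤ))) : ℤ) : ZMod K) := by
          push_cast
          linear_combination (-((N : ZMod K) * (b : ZMod K))) * hAc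
        have e2 : Θ ((a + N * b : ℕ) : ZMod K)
            = Θ ((a : ℕ) : ZMod K) * eN N (-((c : ℤ) * b)) := by
          rw [e1, map_mul, hΘ ((c : ℤ) * b)]
        have e3 : eN K ((a + N * b : ℕ) : ℤ) = eN K (a : ℤ) * eN N (b : ℤ) := by
          have h' : ((a + N * b : ℕ) : ℤ) = (a : ℤ) + (N : ℤ) * b := by push_cast; ring
          rw [h', eN_add, hNK]
          congr 1
          exact eN_mul_base N N hN0 b
        have e4 : (eN N (1 - (c : ℤ))) ^ b = eN N (b : ℤ) * eN N (-((c : ℤ) * b)) := by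
          rw [← eN_pow, show (1 - (c : ℤ)) * b = (b : ℤ) + -((c : ℤ) * b) by ring, eN_add]
        rw [e2, e3, e4]
        ring
      rw [Finset.sum_congr rfl key, ← Finset.mul_sum]
      have hζN : (eN N (1 - (c : ℤ))) ^ N = 1 := by
        rw [← eN_pow, (eN_eq_one_iff N hN0 _).mpr ⟨1 - (c : ℤ), by ring⟩]
      rw [geom _ hζN]
      -- K ∣ a*c - 1
      have hacK : (K : ℤ) ∣ (a : ℤ) * c - 1 := by
        have hcast : ((a * c : ℕ) : ZMod K) = ((1 : ℕ) : ZMod K) := by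
          push_cast
          exact hAc
        have hmod := (ZMod.natCast_eq_natCast_iff _ _ _).mp hcast
        have := hmod.dvd
        rw [dvd_sub_comm] at this
        exact_mod_cast this
      have hiff : eN N (1 - (c : ℤ)) = 1 ↔ a = 1 := by
        rw [eN_eq_one_iff N hN0]
        constructor
        · intro hdvd
          have hNK' : (N : ℤ) ∣ (a : ℤ) * c - 1 :=
            dvd_trans ⟨N, by exact_mod_cast hNK⟩ hacK
          have h2 : (N : ℤ) ∣ ((a : ℤ) - 1) := by
            have heq : (a : ℤ) - 1 = (a : ℤ) * (1 - (c : ℤ)) + ((a : ℤ) * c - 1) := by ring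
            rw [heq]
            exact dvd_add (hdvd.mul_left _) hNK'
          have habs : (a : ℤ) - 1 = 0 := by
            refine Int.eq_zero_of_abs_lt_dvd h2 ?_
            have h' : (a : ℤ) < N := by exact_mod_cast ha
            rw [abs_lt]
            constructor <;> [omega; omega]
          omega
        · rintro rfl
          have hc1 : c = 1 := by
            haveI : Fact (1 < K) := ⟨hK1⟩
            rw [hcdef, Nat.cast_one, ZMod.inv_one, ZMod.val_one]
          rw [hc1]
          simp [eN_zero]
      by_cases ha1 : a = 1
      · subst ha1
        rw [if_pos (hiff.mpr rfl), if_pos rfl]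
        have hΘ1 : Θ (((1 : ℕ) : ZMod K)) = 1 := by rw [Nat.cast_one, map_one]
        have heN1 : eN K ((1 : ℕ) : ℤ) = Complex.exp (2 * Real.pi * Complex.I / (K : ℂ)) := by
          rw [eN]; norm_num
        rw [hΘ1, heN1]
        ring
      · rw [if_neg (fun h => ha1 (hiff.mp h)), if_neg ha1, mul_zero]
  rw [Finset.sum_congr rfl inner, Finset.sum_ite_eq' (Finset.range N) 1
    (fun _ => (N : ℂ) * Complex.exp (2 * Real.pi * Complex.I / (K : ℂ))),
    if_pos (Finset.mem_range.mpr (by omega))]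

/-- A coset on which all Gauss sums are equal to `p^n e^{2πi/p^k}` (Corollary 2.6). -/
theorem gauss_sum_coset_close_to_pn (p n : ℕ) (hp : p.Prime) (hodd : Odd p) (hn : 1 ≤ n)
    (χ : DirichletCharacter ℂ (p ^ (2 * n))) (hχ : χ.IsPrimitive)
    (hpost : ∀ x : ℤ, χ ((1 + p ^ n * x : ℤ) : ZMod (p ^ (2 * n))) = eN (p ^ n) (-x)) :
    ∀ ψ : DirichletCharacter ℂ (p ^ n),
      haveI : NeZero (p ^ (2 * n)) := ⟨pow_ne_zero _ hp.ne_zero⟩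
      (∑ t : ZMod (p ^ (2 * n)),
          (χ * DirichletCharacter.changeLevel
            (pow_dvd_pow p (by omega : n ≤ 2 * n)) ψ) t * eN (p ^ (2 * n)) (t.val : ℤ))
        = (p : ℂ) ^ n * Complex.exp (2 * Real.pi * Complex.I / (p ^ (2 * n))) := by
  intro ψ
  haveI : NeZero (p ^ (2 * n)) := ⟨pow_ne_zero _ hp.ne_zero⟩
  set Θ := χ * DirichletCharacter.changeLevel
    (pow_dvd_pow p (by omega : n ≤ 2 * n)) ψ with hΘdef
  have hΘ : ∀ x : ℤ, Θ ((1 + ((p ^ n : ℕ) : ℤ) * x : ℤ) : ZMod (p ^ (2 * n))) = eN (p ^ n) (-x) := by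
    intro x
    rw [show ((p ^ n : ℕ) : ℤ) = (p : ℤ) ^ n from by push_cast; ring]
    have hu : IsUnit ((1 + p ^ n * x : ℤ) : ZMod (p ^ (2 * n))) := by
      refine IsUnit.of_mul_eq_one ((1 - p ^ n * x : ℤ) : ZMod (p ^ (2 * n))) ?_
      have hint : ((1 + p ^ n * x) * (1 - p ^ n * x) : ℤ) = 1 - (p ^ (2 * n) : ℕ) * x ^ 2 := by
        push_cast
        ring
      rw [← Int.cast_mul, hint]
      push_cast
      rw [← Nat.cast_pow, ZMod.natCast_self]
      ring
    have hψ : DirichletCharacter.changeLevel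
        (pow_dvd_pow p (by omega : n ≤ 2 * n)) ψ ((1 + p ^ n * x : ℤ) : ZMod (p ^ (2 * n))) = 1 := by
      obtain ⟨u, hu'⟩ := hu
      rw [← hu', DirichletCharacter.changeLevel_eq_cast_of_dvd, hu']
      have : (ZMod.cast (((1 + p ^ n * x : ℤ) : ZMod (p ^ (2 * n)))) : ZMod (p ^ n))
          = ((1 + p ^ n * x : ℤ) : ZMod (p ^ n)) :=
        ZMod.cast_intCast (pow_dvd_pow p (by omega : n ≤ 2 * n)) _
      rw [this]
      have h1 : ((1 + p ^ n * x : ℤ) : ZMod (p ^ n)) = 1 := by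
        push_cast
        rw [← Nat.cast_pow, ZMod.natCast_self]
        ring
      rw [h1, map_one]
    rw [hΘdef, MulChar.mul_apply, hpost, hψ, mul_one]
  have hK2 : p ^ (2 * n) = p ^ (2 * n) := rfl
  have := gauss_aux p n (p ^ n) (p ^ (2 * n)) hp hn rfl rfl Θ hΘ
  rw [this]
  push_cast
  ring
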